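/- arXiv:1610.03218 — 6 statements merged into one kernel-verified Lean document; each statement's English description precedes it below -/
import Mathlib

section
/- For a continuous function ψ : [0,∞) → ℝ with ψ(0) ≥ 0, define φ(t) = ψ(t) - inf_{s∈[0,t]} (ψ(s) ∧ 0) and η(t) = -inf_{s∈[0,t]} (ψ(s) ∧ 0). Then (φ, η) solves the one-dimensional Skorohod problem for ψ: φ = ψ + η, φ(t) ≥ 0 for all t, η is nonnegative and nondecreasing with η(0) = 0, and η increases only when φ = 0, i.e., ∫₀^T 1_{φ(s) > 0} dη(s) = 0 for every T. -/
open Set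

/-- The explicit pair `(φ, η)` given by the reflection formula solves the
one-dimensional Skorohod problem for a continuous path `ψ` with `ψ 0 ≥ 0`. -/
theorem skorohod_one_dim_existence
    (ψ : ℝ → ℝ) (hψ : Continuous ψ) (hψ0 : 0 ≤ ψ 0)
    (φ η : ℝ → ℝ)
    (hφ : ∀ t, φ t = ψ t - sInf ((fun s => min (ψ s) 0) '' Icc 0 t))
    (hη : ∀ t, η t = - sInf ((fun s => min (ψ s) 0) '' Icc 0 t)) :
    (∀ t, 0 ≤ t → φ t = ψ t + η t) ∧
    (∀ t, 0 ≤ t → 0 ≤ φ t) ∧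
    (∀ t, 0 ≤ t → 0 ≤ η t) ∧
    η 0 = 0 ∧
    MonotoneOn η (Ici 0) ∧
    (∀ a b : ℝ, 0 ≤ a → a ≤ b → (∀ u ∈ Icc a b, 0 < φ u) → η b = η a) := by
  set f : ℝ → ℝ := fun s => min (ψ s) 0 with hf
  have hfc : Continuous f := hψ.min continuous_const
  set m : ℝ → ℝ := fun t => sInf (f '' Icc 0 t) with hm
  -- basic facts about m
  have hne : ∀ t : ℝ, 0 ≤ t → (f '' Icc 0 t).Nonempty := fun t ht =>
    (nonempty_Icc.2 ht).image f
  have hcpt : ∀ t : ℝ, IsCompact (f '' Icc 0 t) := fun t =>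
    (isCompact_Icc).image hfc
  have hbdd : ∀ t : ℝ, BddBelow (f '' Icc 0 t) := fun t => (hcpt t).bddBelow
  have hmem : ∀ t : ℝ, 0 ≤ t → m t ∈ f '' Icc 0 t := fun t ht =>
    (hcpt t).sInf_mem (hne t ht)
  have hle : ∀ t s : ℝ, 0 ≤ s → s ≤ t → m t ≤ f s := by
    intro t s hs hst
    exact csInf_le (hbdd t) ⟨s, ⟨hs, hst⟩, rfl⟩
  have hmono : ∀ a b : ℝ, 0 ≤ a → a ≤ b → m b ≤ m a := by
    intro a b ha hab
    exact le_csInf (hne a ha) (fun x ⟨s, hs, hx⟩ => hx ▸ hle b s hs.1 (hs.2.trans hab))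
  have hm0 : ∀ t : ℝ, 0 ≤ t → m t ≤ 0 := by
    intro t ht
    exact (hle t 0 le_rfl ht).trans (min_le_right _ _)
  refine ⟨?_, ?_, ?_, ?_, ?_, ?_⟩
  · intro t ht; rw [hφ, hη]; ring
  · intro t ht
    rw [hφ]
    have := (hle t t ht le_rfl).trans (min_le_left _ _)
    linarith
  · intro t ht
    rw [hη]
    linarith [hm0 t ht]
  · rw [hη]
    have : f '' Icc (0:ℝ) 0 = {f 0} := by
      rw [Icc_self, image_singleton]
    rw [show sInf ((fun s => min (ψ s) 0) '' Icc 0 0) = sInf (f '' Icc 0 0) from rfl, this,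
      csInf_singleton]
    simp [hf, min_eq_right hψ0]
  · intro a ha b hb hab
    rw [hη, hη]
    have := hmono a b ha hab
    linarith
  · intro a b ha hab hpos
    rw [hη, hη]
    have h1 : m b ≤ m a := hmono a b ha hab
    rcases eq_or_lt_of_le h1 with h | h
    · show -m b = -m a
      rw [h]
    · exfalso
      obtain ⟨s, ⟨hs0, hsb⟩, hfs⟩ := hmem b (ha.trans hab)
      have hsa : a < s := by
        by_contra hle'
        push_neg at hle'
        exact absurd (hle a s hs0 hle') (by rw [hfs]; exact not_le.2 h)
      have hφs : 0 < φ s := hpos s ⟨hsa.le, hsb⟩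
      have hms : m s = m b := le_antisymm (by rw [← hfs]; exact hle s s hs0 le_rfl)
        (hmono s b hs0 hsb)
      have hψs : m b < ψ s := by
        have h2 : φ s = ψ s - m s := hφ s
        rw [hms] at h2
        linarith
      have : min (ψ s) 0 = m b := hfs
      rcases min_cases (ψ s) 0 with ⟨he, _⟩ | ⟨he, _⟩
      · rw [he] at this; linarith
      · rw [he] at this
        have := hm0 a ha
        linarith
end

section
/- The solution of the one-dimensional Skorohod problem is unique: if ψ : [0,∞) → ℝ is continuous with ψ(0) ≥ 0 and (φ₁, η₁), (φ₂, η₂) are two pairs of continuous functions each satisfying φᵢ = ψ + ηᵢ, φᵢ ≥ 0, ηᵢ nondecreasing with ηᵢ(0) = 0, and ∫₀^T 1_{φᵢ(s) > 0} dηᵢ(s) = 0 for all T, then φ₁ = φ₂ and η₁ = η₂. -/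
open Set

/-- A pair `(φ, η)` is a solution of the one-dimensional Skorohod problem for `ψ`:
`φ = ψ + η`, `φ ≥ 0`, `η` is nonnegative nondecreasing with `η 0 = 0`, and the
Stieltjes measure `dη` charges only the zero set of `φ` (equivalently, `η` is
constant on any interval where `φ > 0`). -/
def IsSkorohodSolution (ψ φ η : ℝ → ℝ) : Prop :=
  (∀ t, 0 ≤ t → φ t = ψ t + η t) ∧
  (∀ t, 0 ≤ t → 0 ≤ φ t) ∧
  (∀ t, 0 ≤ t → 0 ≤ η t) ∧
  η 0 = 0 ∧
  MonotoneOn η (Ici 0) ∧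
  (∀ a b : ℝ, 0 ≤ a → a ≤ b → (∀ u ∈ Icc a b, 0 < φ u) → η b = η a)

lemma skorohod_eta_le
    (ψ φ₁ η₁ φ₂ η₂ : ℝ → ℝ)
    (hη₁ : Continuous η₁) (hη₂ : Continuous η₂)
    (h₁ : IsSkorohodSolution ψ φ₁ η₁)
    (h₂ : IsSkorohodSolution ψ φ₂ η₂) :
    ∀ t, 0 ≤ t → η₁ t ≤ η₂ t := by
  obtain ⟨e₁, pos₁, -, z₁, mono₁, flat₁⟩ := h₁
  obtain ⟨e₂, pos₂, -, z₂, mono₂, flat₂⟩ := h₂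
  intro t ht
  by_contra hlt
  push_neg at hlt
  set δ : ℝ → ℝ := fun u => η₁ u - η₂ u with hδdef
  have hδc : Continuous δ := hη₁.sub hη₂
  have hδ0 : δ 0 = 0 := by simp [hδdef, z₁, z₂]
  have hδt : 0 < δ t := sub_pos.mpr hlt
  set S : Set ℝ := Icc 0 t ∩ {u | δ u ≤ 0} with hSdef
  have hne : (0:ℝ) ∈ S := ⟨⟨le_refl 0, ht⟩, by simp [hδ0]⟩
  have hbdd : BddAbove S := ⟨t, fun u hu => hu.1.2⟩
  set s := sSup S with hs
  have hsS : s ∈ S := by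
    have hcl : IsClosed S := isClosed_Icc.inter (isClosed_le hδc continuous_const)
    exact hcl.csSup_mem ⟨0, hne⟩ hbdd
  have hs0 : 0 ≤ s := hsS.1.1
  have hst : s ≤ t := hsS.1.2
  have hδs : δ s ≤ 0 := hsS.2
  have hslt : s < t := lt_of_le_of_ne hst (by
    intro h
    rw [h] at hδs
    exact absurd hδs (not_le.mpr hδt))
  have hpos : ∀ u ∈ Ioc s t, 0 < δ u := by
    intro u hu
    by_contra h
    push_neg at h
    have : u ∈ S := ⟨⟨hs0.trans hu.1.le, hu.2⟩, h⟩
    exact absurd (le_csSup hbdd this) (not_le.mpr hu.1)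
  have hφpos : ∀ u ∈ Ioc s t, 0 < φ₁ u := by
    intro u hu
    have hu0 : (0:ℝ) ≤ u := hs0.trans hu.1.le
    have h1 := e₁ u hu0
    have h2 := e₂ u hu0
    have : φ₁ u = φ₂ u + δ u := by
      show φ₁ u = φ₂ u + (η₁ u - η₂ u)
      linarith
    rw [this]
    exact add_pos_of_nonneg_of_pos (pos₂ u hu0) (hpos u hu)
  have hflat : ∀ a ∈ Ioc s t, η₁ a = η₁ t := by
    intro a ha
    exact (flat₁ a t (hs0.trans ha.1.le) ha.2
      (fun u hu => hφpos u ⟨lt_of_lt_of_le ha.1 hu.1, hu.2⟩)).symm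
  have hηst : η₁ s = η₁ t := by
    have h1 : Filter.Tendsto η₁ (nhdsWithin s (Ioi s)) (nhds (η₁ s)) :=
      (hη₁.tendsto s).mono_left nhdsWithin_le_nhds
    have hmem : Ioc s t ∈ nhdsWithin s (Ioi s) :=
      Ioc_mem_nhdsGT_of_mem ⟨le_refl s, hslt⟩
    have h2 : Filter.Tendsto η₁ (nhdsWithin s (Ioi s)) (nhds (η₁ t)) := by
      refine Filter.Tendsto.congr' ?_ tendsto_const_nhds
      filter_upwards [hmem] with a ha using (hflat a ha).symm
    exact tendsto_nhds_unique h1 h2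
  have hη2 : η₂ s ≤ η₂ t := mono₂ (mem_Ici.mpr hs0) (mem_Ici.mpr ht) hst
  have : δ t ≤ δ s := by
    simp only [hδdef]
    rw [← hηst]
    linarith
  linarith

/-- Uniqueness of solutions of the one-dimensional Skorohod problem. -/
theorem skorohod_one_dim_uniqueness
    (ψ : ℝ → ℝ) (hψ : Continuous ψ) (hψ0 : 0 ≤ ψ 0)
    (φ₁ η₁ φ₂ η₂ : ℝ → ℝ)
    (hφ₁ : Continuous φ₁) (hη₁ : Continuous η₁)
    (hφ₂ : Continuous φ₂) (hη₂ : Continuous η₂)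
    (h₁ : IsSkorohodSolution ψ φ₁ η₁)
    (h₂ : IsSkorohodSolution ψ φ₂ η₂) :
    ∀ t, 0 ≤ t → φ₁ t = φ₂ t ∧ η₁ t = η₂ t := by
  intro t ht
  have hle := skorohod_eta_le ψ φ₁ η₁ φ₂ η₂ hη₁ hη₂ h₁ h₂ t ht
  have hge := skorohod_eta_le ψ φ₂ η₂ φ₁ η₁ hη₂ hη₁ h₂ h₁ t ht
  have hη : η₁ t = η₂ t := le_antisymm hle hge
  refine ⟨?_, hη⟩
  rw [h₁.1 t ht, h₂.1 t ht, hη]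
end

section
/- Let g : [0,∞) → ℝ≥0 be integrable with ∫₀^δ g ≤ c < 1, and let f : [0,δ] → ℝ be continuous satisfying |f(t)| ≤ λ ∫₀^t g(t-s)|f(s)| ds for all t ∈ [0,δ], where λ c < 1. Then f ≡ 0 on [0,δ]. -/
open Set MeasureTheory

/-- Gronwall-type uniqueness for a renewal-type inequality: if `∫₀^δ g ≤ c` with
`λ c < 1` and `|f t| ≤ λ ∫₀ᵗ g(t-s)|f s| ds` on `[0, δ]`, then `f ≡ 0` on `[0, δ]`. -/
theorem gronwall_renewal_inequality
    (δ c lam : ℝ) (hδ : 0 < δ) (hlam : 0 ≤ lam) (hlc : lam * c < 1)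
    (g : ℝ → ℝ) (hg : ∀ x, 0 ≤ g x)
    (hgint : IntegrableOn g (Icc 0 δ))
    (hgc : ∫ x in (0:ℝ)..δ, g x ≤ c)
    (f : ℝ → ℝ) (hf : ContinuousOn f (Icc 0 δ))
    (hineq : ∀ t ∈ Icc (0:ℝ) δ, |f t| ≤ lam * ∫ s in (0:ℝ)..t, g (t - s) * |f s|) :
    ∀ t ∈ Icc (0:ℝ) δ, f t = 0 := by
  have hgI : IntervalIntegrable g volume 0 δ := by
    rw [intervalIntegrable_iff_integrableOn_Icc_of_le hδ.le]
    exact hgint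
  have hfabs : ContinuousOn (fun t => |f t|) (Icc 0 δ) := hf.abs
  obtain ⟨t₀, ht₀, hmax'⟩ := isCompact_Icc.exists_isMaxOn (nonempty_Icc.2 hδ.le) hfabs
  have hmax : ∀ s ∈ Icc (0:ℝ) δ, |f s| ≤ |f t₀| := fun s hs => hmax' hs
  set M := |f t₀| with hM
  have hM0 : 0 ≤ M := abs_nonneg _
  obtain ⟨ht₀0, ht₀δ⟩ := ht₀
  -- integrability of g (t₀ - ·) on [0, t₀]
  have hgt : IntervalIntegrable (fun s => g (t₀ - s)) volume 0 t₀ := by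
    have := (hgI.comp_sub_left t₀).mono_set (c := 0) (d := t₀) ?_
    · exact this
    · rw [sub_zero]
      rw [uIcc_of_le ht₀0, uIcc_of_ge (by linarith)]
      exact Icc_subset_Icc (by linarith) le_rfl
  have hcont : ContinuousOn (fun s => |f s|) (Set.uIcc 0 t₀) := by
    rw [uIcc_of_le ht₀0]
    exact hfabs.mono (Icc_subset_Icc le_rfl ht₀δ)
  have hint1 : IntervalIntegrable (fun s => g (t₀ - s) * |f s|) volume 0 t₀ :=
    hgt.mul_continuousOn hcont
  have hint2 : IntervalIntegrable (fun s => g (t₀ - s) * M) volume 0 t₀ :=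
    hgt.mul_const M
  have step1 : (∫ s in (0:ℝ)..t₀, g (t₀ - s) * |f s|) ≤ ∫ s in (0:ℝ)..t₀, g (t₀ - s) * M := by
    refine intervalIntegral.integral_mono_on ht₀0 hint1 hint2 fun s hs => ?_
    exact mul_le_mul_of_nonneg_left (hmax s (Icc_subset_Icc le_rfl ht₀δ hs)) (hg _)
  have hcs : (∫ s in (0:ℝ)..t₀, g (t₀ - s)) = ∫ s in (0:ℝ)..t₀, g s := by
    simpa using intervalIntegral.integral_comp_sub_left (a := 0) (b := t₀) g t₀
  have step2 : (∫ s in (0:ℝ)..t₀, g (t₀ - s) * M) = (∫ s in (0:ℝ)..t₀, g s) * M := by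
    rw [intervalIntegral.integral_mul_const, hcs]
  have step3 : (∫ s in (0:ℝ)..t₀, g s) ≤ c := by
    refine le_trans ?_ hgc
    refine intervalIntegral.integral_mono_interval le_rfl ht₀0 ht₀δ ?_ hgI
    exact Filter.Eventually.of_forall fun x => hg x
  have key : M ≤ lam * c * M := by
    calc M ≤ lam * ∫ s in (0:ℝ)..t₀, g (t₀ - s) * |f s| := hineq t₀ ⟨ht₀0, ht₀δ⟩
    _ ≤ lam * ((∫ s in (0:ℝ)..t₀, g s) * M) := by
        rw [← step2]; exact mul_le_mul_of_nonneg_left step1 hlam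
    _ ≤ lam * (c * M) := by
        apply mul_le_mul_of_nonneg_left _ hlam
        exact mul_le_mul_of_nonneg_right step3 hM0
    _ = lam * c * M := by ring
  have hMz : M = 0 := by nlinarith
  intro t ht
  have := hmax t ht
  rw [hMz] at this
  have : |f t| = 0 := le_antisymm this (abs_nonneg _)
  exact abs_eq_zero.mp this
end

section
/- Let Q₀ : [0,∞) → [0,∞) be nondecreasing continuous with Q₀(0)=0 (a distribution function of an atomless measure Q₀ on ℝ₊), and let K + R be continuous nondecreasing with (K+R)(0) = 0. For x ≥ 0 and t ≥ 0, set 𝒬_t[0,x] = Q₀(x) - (K+R)(t) + sup_{s≤t} ((K+R)(s) - Q₀(x))⁺, and define σ̃_t = sup{x : (K+R)(t) ≥ Q₀(x)}. Then for every t: 𝒬_t[0,x] = 0 whenever x < σ̃_t, and 𝒬_t[0,x] > 0 whenever Q₀(x) > (K+R)(t) and x is such that (K+R)(s) < Q₀(x) for all s ≤ t. -/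
open Set

/-- The left edge of the support of the queue measure is the generalized inverse
of `Q₀` at the cumulative departures `A = K + R`: with
`𝒬_t[0,x] = Q₀(x) - A(t) + sup_{s≤t}(A(s) - Q₀(x))⁺` and
`σ̃_t = sup{x : A(t) ≥ Q₀(x)}`, one has `𝒬_t[0,x] = 0` for `x < σ̃_t`, and
`𝒬_t[0,x] > 0` when `Q₀(x) > A(t)` and `A(s) < Q₀(x)` for all `s ≤ t`. -/
theorem queue_support_left_edge
    (Q₀ A : ℝ → ℝ)
    (hQ₀m : MonotoneOn Q₀ (Ici 0)) (hQ₀c : Continuous Q₀) (hQ₀0 : Q₀ 0 = 0)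
    (hAm : MonotoneOn A (Ici 0)) (hAc : Continuous A) (hA0 : A 0 = 0)
    (𝒬 : ℝ → ℝ → ℝ)
    (h𝒬 : ∀ t x : ℝ, 0 ≤ t → 0 ≤ x →
      𝒬 t x = Q₀ x - A t + sSup ((fun s => max (A s - Q₀ x) 0) '' Icc 0 t)) :
    ∀ t : ℝ, 0 ≤ t → ∀ x : ℝ, 0 ≤ x →
      ((x < sSup {y : ℝ | 0 ≤ y ∧ Q₀ y ≤ A t} → 𝒬 t x = 0) ∧
       ((A t < Q₀ x ∧ ∀ s ∈ Icc (0:ℝ) t, A s < Q₀ x) → 0 < 𝒬 t x)) := by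
  intro t ht x hx
  have hIcc : (Icc (0:ℝ) t).Nonempty := ⟨0, le_refl 0, ht⟩
  constructor
  · intro hlt
    set S := {y : ℝ | 0 ≤ y ∧ Q₀ y ≤ A t} with hS
    have hQx : Q₀ x ≤ A t := by
      by_cases hb : BddAbove S
      · have hAt0 : (0:ℝ) ≤ A t := by
          have := hAm (mem_Ici.mpr le_rfl) (mem_Ici.mpr ht) ht
          linarith [hA0]
        have hne : S.Nonempty := ⟨0, le_refl 0, by rw [hQ₀0]; exact hAt0⟩
        obtain ⟨y, hy, hxy⟩ := exists_lt_of_lt_csSup hne hlt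
        exact le_trans (hQ₀m hx (le_trans hx hxy.le) hxy.le) hy.2
      · rw [Real.sSup_of_not_bddAbove hb] at hlt; linarith
    have hbd : ∀ v ∈ (fun s => max (A s - Q₀ x) 0) '' Icc 0 t, v ≤ A t - Q₀ x := by
      rintro v ⟨s, hs, rfl⟩
      have := hAm (mem_Ici.mpr hs.1) (mem_Ici.mpr ht) hs.2
      exact max_le (by linarith) (by linarith)
    have hmax : max (A t - Q₀ x) 0 = A t - Q₀ x := max_eq_left (by linarith)
    have hsup : sSup ((fun s => max (A s - Q₀ x) 0) '' Icc 0 t) = A t - Q₀ x := by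
      apply le_antisymm
      · exact csSup_le (hIcc.image _) hbd
      · calc A t - Q₀ x = max (A t - Q₀ x) 0 := hmax.symm
          _ ≤ _ := le_csSup ⟨A t - Q₀ x, hbd⟩ ⟨t, ⟨ht, le_refl t⟩, rfl⟩
    rw [h𝒬 t x ht hx, hsup]; ring
  · rintro ⟨hAt, hall⟩
    have hsup : sSup ((fun s => max (A s - Q₀ x) 0) '' Icc 0 t) = 0 := by
      have himg : (fun s => max (A s - Q₀ x) 0) '' Icc 0 t = {0} := by
        apply Subset.antisymm
        · rintro v ⟨s, hs, rfl⟩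
          have := hall s hs
          simp [max_eq_right (by linarith : A s - Q₀ x ≤ (0:ℝ))]
        · intro v hv
          rw [mem_singleton_iff] at hv
          subst hv
          refine ⟨0, ⟨le_refl 0, ht⟩, ?_⟩
          have := hall 0 ⟨le_refl 0, ht⟩
          exact max_eq_right (by linarith)
      rw [himg, csSup_singleton]
    rw [h𝒬 t x ht hx, hsup]; linarith
end

section
/- Let b : [0,T] → ℝ be continuous and ψ : [0,T] → ℝ continuous with ψ(0) ≤ b(0). Then there exists a unique pair (φ, η) of continuous functions such that φ = ψ - η, φ(t) ≤ b(t) for all t, η is nonnegative nondecreasing with η(0) = 0, and ∫₀^T 1_{φ(s) < b(s)} dη(s) = 0; moreover η(t) = sup_{s∈[0,t]} (ψ(s) - b(s))⁺. -/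
open Set

/-- Skorohod problem on the time-varying domain `(-∞, b(t)]`: for continuous
`b, ψ` with `ψ 0 ≤ b 0` there is a unique pair `(φ, η)` of continuous functions
with `φ = ψ - η`, `φ ≤ b`, `η` nonnegative nondecreasing with `η 0 = 0`, and
`dη` carried by `{φ = b}`; moreover `η t = sup_{s≤t} (ψ s - b s)⁺`. -/
theorem skorohod_time_varying_barrier
    (T : ℝ) (hT : 0 ≤ T)
    (b ψ : ℝ → ℝ) (hb : ContinuousOn b (Icc 0 T)) (hψ : ContinuousOn ψ (Icc 0 T))
    (h0 : ψ 0 ≤ b 0) :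
    ∃ φ η : ℝ → ℝ,
      ContinuousOn φ (Icc 0 T) ∧ ContinuousOn η (Icc 0 T) ∧
      (∀ t ∈ Icc (0:ℝ) T, φ t = ψ t - η t) ∧
      (∀ t ∈ Icc (0:ℝ) T, φ t ≤ b t) ∧
      (∀ t ∈ Icc (0:ℝ) T, 0 ≤ η t) ∧ η 0 = 0 ∧ MonotoneOn η (Icc 0 T) ∧
      (∀ a c : ℝ, 0 ≤ a → a ≤ c → c ≤ T →
          (∀ u ∈ Icc a c, φ u < b u) → η c = η a) ∧
      (∀ t ∈ Icc (0:ℝ) T, η t = sSup ((fun s => max (ψ s - b s) 0) '' Icc 0 t)) ∧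
      (∀ φ' η' : ℝ → ℝ,
        ContinuousOn φ' (Icc 0 T) → ContinuousOn η' (Icc 0 T) →
        (∀ t ∈ Icc (0:ℝ) T, φ' t = ψ t - η' t) →
        (∀ t ∈ Icc (0:ℝ) T, φ' t ≤ b t) →
        (∀ t ∈ Icc (0:ℝ) T, 0 ≤ η' t) → η' 0 = 0 → MonotoneOn η' (Icc 0 T) →
        (∀ a c : ℝ, 0 ≤ a → a ≤ c → c ≤ T →
            (∀ u ∈ Icc a c, φ' u < b u) → η' c = η' a) →
        ∀ t ∈ Icc (0:ℝ) T, φ' t = φ t ∧ η' t = η t) := by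
  classical
  set f : ℝ → ℝ := fun s => max (ψ s - b s) 0 with hf_def
  have hf : ContinuousOn f (Icc 0 T) := ((hψ.sub hb).sup continuousOn_const)
  have hf0 : f 0 = 0 := max_eq_right (by linarith)
  have hfnn : ∀ s, 0 ≤ f s := fun s => le_max_right _ _
  set η : ℝ → ℝ := fun t => sSup (f '' Icc 0 t) with hη_def
  set φ : ℝ → ℝ := fun t => ψ t - η t with hφ_def
  -- basic facts
  have hsub : ∀ t : ℝ, t ≤ T → Icc (0:ℝ) t ⊆ Icc 0 T := fun t ht =>
    Icc_subset_Icc_right ht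
  have hbdd : ∀ t : ℝ, t ≤ T → BddAbove (f '' Icc 0 t) := fun t ht =>
    (isCompact_Icc.image_of_continuousOn (hf.mono (hsub t ht))).bddAbove
  have hne : ∀ t : ℝ, 0 ≤ t → (f '' Icc 0 t).Nonempty :=
    fun t ht => (nonempty_Icc.2 ht).image f
  have hle_η : ∀ t ∈ Icc (0:ℝ) T, ∀ s ∈ Icc (0:ℝ) t, f s ≤ η t := by
    intro t ht s hs
    exact le_csSup (hbdd t ht.2) (mem_image_of_mem f hs)
  have hηnn : ∀ t ∈ Icc (0:ℝ) T, 0 ≤ η t := by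
    intro t ht
    have := hle_η t ht 0 ⟨le_rfl, ht.1⟩
    rw [hf0] at this; exact this
  have hη0 : η 0 = 0 := by
    have : Icc (0:ℝ) 0 = {0} := Icc_self 0
    simp only [hη_def, this, image_singleton, csSup_singleton, hf0]
  have hmono : MonotoneOn η (Icc 0 T) := by
    intro s hs t ht hst
    exact csSup_le_csSup (hbdd t ht.2) (hne s hs.1)
      (image_mono (Icc_subset_Icc_right hst))
  have hηge : ∀ t ∈ Icc (0:ℝ) T, ψ t - b t ≤ η t := by
    intro t ht
    exact le_trans (le_max_left _ _) (hle_η t ht t ⟨ht.1, le_rfl⟩)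
  -- splitting of the supremum
  have hsplit : ∀ a c : ℝ, 0 ≤ a → a ≤ c → c ≤ T →
      η c = η a ⊔ sSup (f '' Icc a c) := by
    intro a c ha hac hcT
    have h1 : Icc (0:ℝ) c = Icc 0 a ∪ Icc a c := (Icc_union_Icc_eq_Icc ha hac).symm
    have hbdd2 : BddAbove (f '' Icc a c) :=
      (isCompact_Icc.image_of_continuousOn
        (hf.mono (Icc_subset_Icc ha hcT))).bddAbove
    rw [hη_def]
    simp only
    rw [h1, image_union]
    exact csSup_union (hbdd a (le_trans hac hcT)) (hne a ha) hbdd2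
      ((nonempty_Icc.2 hac).image f)
  -- continuity of η
  have hηcont : ContinuousOn η (Icc 0 T) := by
    have huc : UniformContinuousOn f (Icc 0 T) :=
      isCompact_Icc.uniformContinuousOn_of_continuous hf
    rw [Metric.uniformContinuousOn_iff] at huc
    rw [Metric.continuousOn_iff]
    intro t ht ε hε
    obtain ⟨δ, hδ, hδ'⟩ := huc (ε / 2) (by linarith)
    refine ⟨δ, hδ, fun s hs hd => ?_⟩
    -- key: for u ≤ v in [0,T] with v - u < δ, η v ≤ η u + ε/2
    have key : ∀ u v : ℝ, u ∈ Icc (0:ℝ) T → v ∈ Icc (0:ℝ) T → u ≤ v →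
        v - u < δ → η v ≤ η u + ε / 2 := by
      intro u v hu hv huv hd
      rw [hsplit u v hu.1 huv hv.2]
      refine sup_le (by linarith [hηnn u hu]) ?_
      refine csSup_le ((nonempty_Icc.2 huv).image f) ?_
      rintro x ⟨w, hw, rfl⟩
      have hw' : w ∈ Icc (0:ℝ) T := ⟨le_trans hu.1 hw.1, le_trans hw.2 hv.2⟩
      have : dist (f w) (f u) < ε / 2 := by
        refine hδ' w hw' u hu ?_
        rw [Real.dist_eq, abs_of_nonneg (by linarith [hw.1, hw.2] : (0:ℝ) ≤ w - u)]
        linarith [hw.2]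
      have := le_of_lt (lt_of_abs_lt (by rwa [Real.dist_eq] at this))
      have hfu : f u ≤ η u := hle_η u hu u ⟨hu.1, le_rfl⟩
      linarith
    rcases le_total s t with h | h
    · have h1 : η s ≤ η t := hmono hs ht h
      have h2 : η t ≤ η s + ε / 2 := key s t hs ht h
        (by rw [Real.dist_eq] at hd; cases abs_lt.1 hd; linarith)
      rw [Real.dist_eq, abs_of_nonpos (by linarith)]
      linarith
    · have h1 : η t ≤ η s := hmono ht hs h
      have h2 : η s ≤ η t + ε / 2 := key t s ht hs h
        (by rw [Real.dist_eq] at hd; cases abs_lt.1 hd; linarith)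
      rw [Real.dist_eq, abs_of_nonneg (by linarith)]
      linarith
  -- flat condition for η
  have hflat : ∀ a c : ℝ, 0 ≤ a → a ≤ c → c ≤ T →
      (∀ u ∈ Icc a c, φ u < b u) → η c = η a := by
    intro a c ha hac hcT hlt
    have hcc : c ∈ Icc (0:ℝ) T := ⟨le_trans ha hac, hcT⟩
    have haa : a ∈ Icc (0:ℝ) T := ⟨ha, le_trans hac hcT⟩
    obtain ⟨u, hu, husup⟩ := isCompact_Icc.exists_sSup_image_eq
      (nonempty_Icc.2 hac) (hf.mono (Icc_subset_Icc ha hcT))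
    have huT : u ∈ Icc (0:ℝ) T := ⟨le_trans ha hu.1, le_trans hu.2 hcT⟩
    rw [hsplit a c ha hac hcT, husup]
    rcases le_or_gt (f u) (η a) with h | h
    · exact sup_eq_left.2 h
    · exfalso
      have hfu_pos : 0 < f u := lt_of_le_of_lt (hηnn a haa) h
      have hfu_eq : f u = ψ u - b u := by
        by_contra hne'
        have : f u = 0 := by
          rcases max_cases (ψ u - b u) 0 with ⟨h1, _⟩ | ⟨h1, _⟩
          · exact absurd h1 hne'
          · exact h1
        linarith
      have hφu : φ u < b u := hlt u hu
      have hraw : ψ u - b u < η u := by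
        simp only [hφ_def] at hφu; linarith
      have hηu : η u ≤ f u := by
        rw [hsplit a u ha hu.1 huT.2]
        refine sup_le (le_of_lt h) ?_
        rw [← husup]
        exact csSup_le_csSup ((isCompact_Icc.image_of_continuousOn
          (hf.mono (Icc_subset_Icc ha hcT))).bddAbove)
          ((nonempty_Icc.2 hu.1).image f)
          (image_mono (Icc_subset_Icc_right hu.2))
      rw [hfu_eq] at hηu
      linarith
  refine ⟨φ, η, hψ.sub hηcont, hηcont, fun t _ => rfl, ?_, hηnn, hη0, hmono, hflat,
    fun t _ => rfl, ?_⟩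
  · intro t ht
    have := hηge t ht
    simp only [hφ_def]; linarith
  · -- uniqueness
    intro φ' η' hφ'c hη'c hφ'eq hφ'le hη'nn hη'0 hη'mono hflat' t ht
    -- η ≤ η'
    have hge : ∀ s ∈ Icc (0:ℝ) T, η s ≤ η' s := by
      intro s hs
      refine csSup_le (hne s hs.1) ?_
      rintro x ⟨w, hw, rfl⟩
      have hwT : w ∈ Icc (0:ℝ) T := ⟨hw.1, le_trans hw.2 hs.2⟩
      have h1 : ψ w - b w ≤ η' w := by
        have := hφ'le w hwT
        rw [hφ'eq w hwT] at this; linarith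
      have h2 : f w ≤ η' w := max_le h1 (hη'nn w hwT)
      exact le_trans h2 (hη'mono hwT hs hw.2)
    -- η' ≤ η
    have hle : η' t ≤ η t := by
      by_contra hcon
      push_neg at hcon
      set S : Set ℝ := {s ∈ Icc (0:ℝ) t | η' s ≤ η s} with hS_def
      have h0S : (0:ℝ) ∈ S := ⟨⟨le_rfl, ht.1⟩, by rw [hη'0, hη0]⟩
      have hSne : S.Nonempty := ⟨0, h0S⟩
      have hSbdd : BddAbove S := ⟨t, fun x hx => hx.1.2⟩
      have hSclosed : IsClosed S := by
        have : S = Icc 0 t ∩ (fun s => η' s - η s) ⁻¹' Iic 0 := by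
          ext x; simp only [hS_def, mem_sep_iff, mem_inter_iff, mem_preimage,
            mem_Iic, sub_nonpos]
        rw [this]
        exact ContinuousOn.preimage_isClosed_of_isClosed
          ((hη'c.mono (hsub t ht.2)).sub (hηcont.mono (hsub t ht.2)))
          isClosed_Icc isClosed_Iic
      set a := sSup S with ha_def
      have haS : a ∈ S := hSclosed.csSup_mem hSne hSbdd
      have haT : a ∈ Icc (0:ℝ) T := ⟨haS.1.1, le_trans haS.1.2 ht.2⟩
      have hat : a ≤ t := haS.1.2
      have ha_lt : a < t := by
        rcases lt_or_eq_of_le hat with h | h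
        · exact h
        · exfalso; rw [h] at haS; exact absurd haS.2 (not_le.2 hcon)
      -- on (a, t], η < η' hence φ' < b
      have hstrict : ∀ u ∈ Ioc a t, φ' u < b u := by
        intro u hu
        have huT : u ∈ Icc (0:ℝ) T := ⟨le_trans haT.1 (le_of_lt hu.1),
          le_trans hu.2 ht.2⟩
        have hnotS : u ∉ S := fun hmem => absurd (le_csSup hSbdd hmem)
          (not_le.2 hu.1)
        have : ¬ η' u ≤ η u := fun hle' => hnotS ⟨⟨le_trans haT.1 (le_of_lt hu.1),
          hu.2⟩, hle'⟩
        push_neg at this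
        have h1 : ψ u - b u ≤ η u := hηge u huT
        rw [hφ'eq u huT]
        linarith
      -- η' is constant on (a, t]
      have hconst : ∀ a' ∈ Ioc a t, η' t = η' a' := by
        intro a' ha'
        refine hflat' a' t (le_trans haT.1 (le_of_lt ha'.1)) ha'.2 ht.2 ?_
        intro u hu
        exact hstrict u ⟨lt_of_lt_of_le ha'.1 hu.1, hu.2⟩
      -- take the limit a' → a⁺
      have hηa : η' a = η' t := by
        have htend : Filter.Tendsto η' (nhdsWithin a (Ioc a t)) (nhds (η' a)) := by
          have := (hη'c a haT).mono (show Ioc a t ⊆ Icc 0 T from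
            fun x hx => ⟨le_trans haT.1 (le_of_lt hx.1), le_trans hx.2 ht.2⟩)
          exact this
        have htend2 : Filter.Tendsto η' (nhdsWithin a (Ioc a t)) (nhds (η' t)) := by
          refine Filter.Tendsto.congr' ?_ tendsto_const_nhds
          filter_upwards [self_mem_nhdsWithin] with x hx
          exact hconst x hx
        have : (nhdsWithin a (Ioc a t)).NeBot := by
          rw [nhdsWithin_Ioc_eq_nhdsGT ha_lt]
          infer_instance
        exact tendsto_nhds_unique htend htend2
      have : η' t ≤ η t := by
        calc η' t = η' a := hηa.symm
          _ ≤ η a := haS.2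
          _ ≤ η t := hmono haT ht hat
      exact absurd this (not_le.2 hcon)
    have hηeq : η' t = η t := le_antisymm hle (hge t ht)
    exact ⟨by rw [hφ'eq t ht, hηeq], hηeq⟩
end

section
/- Let α_t[0,x] = Q₀[0,x] + ∫₀^t 1_{x≥s} λ(s) π[0, x-s] ds with π a probability measure satisfying π[0, 2] = 0, let K, R be continuous nondecreasing with K(0)=R(0)=0, and suppose 𝒬_t[0,x] = Γ₁[α_·[0,x] - K - R](t) for all x, t, and 𝒬_t[0,t) = 0 for all t. Then for all t ∈ [0,1], the total mass Q_t := 𝒬_t[0,∞) satisfies Q_t ≤ b_t, where b_t = Q₀(t,∞) + E_t and E_t = ∫₀^t λ(s) ds. -/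
open Set MeasureTheory

/-- Barrier bound for the queue mass (inequality (23) of the paper): under the
patience-gap assumption `π[0,2] = 0`, the total queue mass
`Q_t = 𝒬_t[0,∞)` satisfies `Q_t ≤ b_t = Q₀(t,∞) + E_t` for `t ∈ [0,1]`, where
`𝒬_t[0,x] = Γ₁[α_·[0,x] - K - R](t)` and `E_t = ∫₀ᵗ λ(s) ds`. -/
theorem queue_mass_barrier_bound
    (lam : ℝ → ℝ) (hlmeas : Measurable lam) (hlpos : ∀ s, 0 ≤ lam s)
    (hlint : IntegrableOn lam (Icc (0:ℝ) 1))
    (π : Measure ℝ) [IsProbabilityMeasure π] (hπ2 : π (Icc (0:ℝ) 2) = 0)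
    (Q0m : Measure ℝ) [IsFiniteMeasure Q0m] [NullSingletonClass Q0m]
    (K R : ℝ → ℝ) (hKc : Continuous K) (hRc : Continuous R)
    (hKm : MonotoneOn K (Ici 0)) (hRm : MonotoneOn R (Ici 0))
    (hK0 : K 0 = 0) (hR0 : R 0 = 0)
    (α : ℝ → ℝ → ℝ)
    (hα : ∀ t x : ℝ, α t x = (Q0m (Icc 0 x)).toReal +
        ∫ s in (0:ℝ)..t, (if s ≤ x then lam s * (π (Icc 0 (x - s))).toReal else 0))
    (QQ : ℝ → ℝ → ℝ)
    (hQQ : ∀ t x : ℝ, 0 ≤ t → QQ t x = (α t x - K t - R t) -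
        sInf ((fun s => min (α s x - K s - R s) 0) '' Icc 0 t))
    (hzero : ∀ t x : ℝ, 0 ≤ x → x < t → QQ t x = 0)
    (Qtot : ℝ → ℝ)
    (hQtot : ∀ t : ℝ, Filter.Tendsto (fun x => QQ t x) Filter.atTop (nhds (Qtot t))) :
    ∀ t ∈ Icc (0:ℝ) 1,
      Qtot t ≤ (Q0m (Ioi t)).toReal + ∫ s in (0:ℝ)..t, lam s := by
  intro t ht
  obtain ⟨ht0, ht1⟩ := ht
  have hIoiIci : ∀ a : ℝ, Q0m (Ioi a) = Q0m (Ici a) := fun a =>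
    measure_congr Ioi_ae_eq_Ici
  -- interval integrability of lam on [0,t]
  have hlamII : IntervalIntegrable lam volume 0 t := by
    apply IntegrableOn.intervalIntegrable
    apply hlint.mono_set
    rw [uIcc_of_le ht0]
    exact Icc_subset_Icc le_rfl ht1
  rcases eq_or_lt_of_le ht0 with ht0' | htpos
  · -- case t = 0
    subst ht0'
    have hQ0x : ∀ x : ℝ, QQ 0 x ≤ (Q0m (Ioi (0:ℝ))).toReal := by
      intro x
      have h1 : QQ 0 x = α 0 x - K 0 - R 0 -
          sInf ((fun s => min (α s x - K s - R s) 0) '' Icc 0 0) := hQQ 0 x le_rfl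
      rw [Icc_self, image_singleton, csInf_singleton, hK0, hR0] at h1
      have hα0 : α 0 x = (Q0m (Icc 0 x)).toReal := by
        rw [hα]; simp
      have hnn : 0 ≤ α 0 x := by rw [hα0]; exact ENNReal.toReal_nonneg
      have : QQ 0 x = α 0 x := by rw [h1]; rw [min_eq_right (by linarith)]; ring
      rw [this, hα0, hIoiIci 0]
      exact ENNReal.toReal_mono (measure_ne_top _ _)
        (measure_mono (fun y hy => hy.1))
    have := le_of_tendsto (hQtot 0) (Filter.Eventually.of_forall hQ0x)
    simpa using this
  -- case 0 < t
  -- Key bound: for any 0 ≤ x' < t and x ≥ x', QQ t x ≤ Q0(Ioi x') + ∫ lam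
  have key : ∀ x' : ℝ, 0 ≤ x' → x' < t →
      Qtot t ≤ (Q0m (Ioi x')).toReal + ∫ s in (0:ℝ)..t, lam s := by
    intro x' hx'0 hx't
    -- the truncated arrival process at level x' is constant in time on [0,t]
    have hint0 : ∀ σ ∈ Icc (0:ℝ) t,
        (∫ u in (0:ℝ)..σ, if u ≤ x' then lam u * (π (Icc 0 (x' - u))).toReal else 0) = 0 := by
      intro σ hσ
      rw [intervalIntegral.integral_congr (g := fun _ => (0:ℝ)) ?_,
        intervalIntegral.integral_zero]
      intro u hu
      rw [uIcc_of_le hσ.1] at hu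
      by_cases h : u ≤ x'
      · have hπ0 : π (Icc 0 (x' - u)) = 0 :=
          measure_mono_null (Icc_subset_Icc le_rfl (by linarith [hu.1])) hπ2
        simp [h, hπ0]
      · simp [h]
    have hαconst : ∀ s ∈ Icc (0:ℝ) t, α s x' = (Q0m (Icc 0 x')).toReal := by
      intro s hs
      rw [hα, hint0 s hs, add_zero]
    have hbound : ∀ x : ℝ, x' ≤ x →
        QQ t x ≤ (Q0m (Ioi x')).toReal + ∫ s in (0:ℝ)..t, lam s := by
      intro x hx
      -- monotonicity in x
      have hmono : ∀ s ∈ Icc (0:ℝ) t, α s x' ≤ α s x := by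
        intro s hs
        rw [hα s x', hα s x]
        have h1 : (Q0m (Icc 0 x')).toReal ≤ (Q0m (Icc 0 x)).toReal :=
          ENNReal.toReal_mono (measure_ne_top _ _)
            (measure_mono (Icc_subset_Icc le_rfl hx))
        have h2 : (0:ℝ) ≤ ∫ u in (0:ℝ)..s,
            (if u ≤ x then lam u * (π (Icc 0 (x - u))).toReal else 0) := by
          apply intervalIntegral.integral_nonneg hs.1
          intro u _
          by_cases h : u ≤ x
          · simp only [h, if_true]
            exact mul_nonneg (hlpos u) ENNReal.toReal_nonneg
          · simp [h]
        have h3 : (∫ u in (0:ℝ)..s,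
            (if u ≤ x' then lam u * (π (Icc 0 (x' - u))).toReal else 0)) = 0 :=
          hint0 s hs
        linarith
      -- compare the Skorohod infima
      set f : ℝ → ℝ := fun s => min (α s x - K s - R s) 0 with hf
      set g : ℝ → ℝ := fun s => min (α s x' - K s - R s) 0 with hg
      have hne : (Icc (0:ℝ) t).Nonempty := nonempty_Icc.2 ht0
      have hbdd : BddBelow (g '' Icc 0 t) := by
        have himg : g '' Icc 0 t =
            (fun s => min ((Q0m (Icc 0 x')).toReal - K s - R s) 0) '' Icc 0 t := by
          apply image_congr
          intro s hs
          rw [hg]; simp only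
          rw [hαconst s hs]
        rw [himg]
        exact (isCompact_Icc.image_of_continuousOn
          (((continuous_const.sub hKc).sub hRc).min continuous_const).continuousOn).bddBelow
      have hsInf : sInf (g '' Icc 0 t) ≤ sInf (f '' Icc 0 t) := by
        apply le_csInf (hne.image f)
        rintro y ⟨s, hs, rfl⟩
        refine le_trans (csInf_le hbdd ⟨s, hs, rfl⟩) ?_
        exact min_le_min (by linarith [hmono s hs]) le_rfl
      have hz : QQ t x' = 0 := hzero t x' hx'0 hx't
      have hQx' : α t x' - K t - R t - sInf (g '' Icc 0 t) = 0 := by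
        rw [← hQQ t x' ht0]; exact hz
      have hQx : QQ t x = α t x - K t - R t - sInf (f '' Icc 0 t) := hQQ t x ht0
      have step1 : QQ t x ≤ α t x - α t x' := by
        rw [hQx]; linarith
      -- bound the difference of the arrival processes
      have hαt : α t x - α t x' = (Q0m (Icc 0 x)).toReal - (Q0m (Icc 0 x')).toReal +
          ∫ u in (0:ℝ)..t, (if u ≤ x then lam u * (π (Icc 0 (x - u))).toReal else 0) := by
        rw [hα t x, hα t x', hint0 t ⟨ht0, le_rfl⟩]; ring
      have hmeasdiff : (Q0m (Icc 0 x)).toReal ≤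
          (Q0m (Icc 0 x')).toReal + (Q0m (Ioi x')).toReal := by
        have hsub : Icc (0:ℝ) 0 ∪ (Icc 0 x' ∪ Ioi x') ⊇ Icc 0 x := by
          intro y hy
          rcases le_or_gt y x' with h | h
          · exact Or.inr (Or.inl ⟨hy.1, h⟩)
          · exact Or.inr (Or.inr h)
        have h1 : Q0m (Icc 0 x) ≤ Q0m (Icc 0 x') + Q0m (Ioi x') := by
          refine le_trans (measure_mono (fun y hy => ?_)) (measure_union_le _ _)
          rcases le_or_gt y x' with h | h
          · exact Or.inl ⟨hy.1, h⟩
          · exact Or.inr h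
        calc (Q0m (Icc 0 x)).toReal
            ≤ (Q0m (Icc 0 x') + Q0m (Ioi x')).toReal := ENNReal.toReal_mono
              (by simp [ENNReal.add_ne_top, measure_ne_top]) h1
          _ = (Q0m (Icc 0 x')).toReal + (Q0m (Ioi x')).toReal :=
              ENNReal.toReal_add (measure_ne_top _ _) (measure_ne_top _ _)
      -- the truncated integral is at most ∫ lam
      have hfle : ∀ u : ℝ, (if u ≤ x then lam u * (π (Icc 0 (x - u))).toReal else 0) ≤ lam u := by
        intro u
        by_cases h : u ≤ x
        · simp only [h, if_true]
          have h1 : (π (Icc 0 (x - u))).toReal ≤ 1 := by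
            simpa using ENNReal.toReal_mono ENNReal.one_ne_top (prob_le_one (μ := π))
          calc lam u * (π (Icc 0 (x - u))).toReal ≤ lam u * 1 := by
                exact mul_le_mul_of_nonneg_left h1 (hlpos u)
            _ = lam u := mul_one _
        · simp [h, hlpos u]
      have hfnn : ∀ u : ℝ, 0 ≤ (if u ≤ x then lam u * (π (Icc 0 (x - u))).toReal else 0) := by
        intro u
        by_cases h : u ≤ x
        · simp only [h, if_true]; exact mul_nonneg (hlpos u) ENNReal.toReal_nonneg
        · simp [h]
      have hantimeas : Measurable (fun u => (π (Icc 0 (x - u))).toReal) := by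
        have : Antitone (fun u => (π (Icc 0 (x - u))).toReal) := by
          intro u v huv
          exact ENNReal.toReal_mono (measure_ne_top _ _)
            (measure_mono (Icc_subset_Icc le_rfl (by linarith)))
        exact this.measurable
      have hmeasf : Measurable (fun u => if u ≤ x then lam u * (π (Icc 0 (x - u))).toReal else 0) :=
        Measurable.ite (measurableSet_le measurable_id measurable_const)
          (hlmeas.mul hantimeas) measurable_const
      have hII : IntervalIntegrable
          (fun u => if u ≤ x then lam u * (π (Icc 0 (x - u))).toReal else 0) volume 0 t := by
        apply hlamII.mono_fun hmeasf.aestronglyMeasurable.restrict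
        filter_upwards with u
        rw [Real.norm_eq_abs, Real.norm_eq_abs, abs_of_nonneg (hfnn u), abs_of_nonneg (hlpos u)]
        exact hfle u
      have hintle : (∫ u in (0:ℝ)..t, (if u ≤ x then lam u * (π (Icc 0 (x - u))).toReal else 0)) ≤
          ∫ s in (0:ℝ)..t, lam s :=
        intervalIntegral.integral_mono_on ht0 hII hlamII (fun u _ => hfle u)
      linarith
    exact le_of_tendsto (hQtot t) (Filter.eventually_atTop.2 ⟨x', hbound⟩)
  -- take x' → t⁻ along the sequence x n = t - t/(n+1)
  set xs : ℕ → ℝ := fun n => t - t / (n + 1) with hxs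
  have hxs0 : ∀ n : ℕ, 0 ≤ xs n := by
    intro n
    have h1 : t / ((n : ℝ) + 1) ≤ t / 1 := by
      apply div_le_div_of_nonneg_left (le_of_lt htpos) one_pos
      exact le_add_of_nonneg_left (Nat.cast_nonneg n)
    simp only [hxs]
    have : t / 1 = t := div_one t
    linarith
  have hxst : ∀ n : ℕ, xs n < t := by
    intro n
    have : 0 < t / ((n : ℝ) + 1) := div_pos htpos (by positivity)
    simp only [hxs]; linarith
  have hmonoxs : Monotone xs := by
    intro n m hnm
    simp only [hxs]
    have : t / ((m : ℝ) + 1) ≤ t / ((n : ℝ) + 1) := by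
      apply div_le_div_of_nonneg_left (le_of_lt htpos) (by positivity)
      have : (n : ℝ) ≤ m := Nat.cast_le.2 hnm
      linarith
    linarith
  have hiInter : ⋂ n, Ioi (xs n) = Ici t := by
    ext y
    simp only [mem_iInter, mem_Ioi, mem_Ici]
    constructor
    · intro h
      by_contra hyt
      push_neg at hyt
      obtain ⟨n, hn⟩ := exists_nat_gt (t / (t - y))
      have hty : 0 < t - y := by linarith
      have h1 : t / (t - y) < (n : ℝ) + 1 := by linarith
      have h2 : t < ((n : ℝ) + 1) * (t - y) := (div_lt_iff₀ hty).mp h1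
      have h3 : t / ((n : ℝ) + 1) < t - y := by
        rw [div_lt_iff₀ (by positivity)]
        linarith [mul_comm ((n : ℝ) + 1) (t - y)]
      have := h n
      simp only [hxs] at this
      linarith
    · intro h n
      exact lt_of_lt_of_le (hxst n) h
  have hanti : Antitone (fun n => Ioi (xs n)) := fun n m hnm =>
    Ioi_subset_Ioi (hmonoxs hnm)
  have htend : Filter.Tendsto (fun n => Q0m (Ioi (xs n))) Filter.atTop (nhds (Q0m (Ici t))) := by
    have := tendsto_measure_iInter_atTop (μ := Q0m) (s := fun n => Ioi (xs n))
      (fun n => measurableSet_Ioi.nullMeasurableSet) hanti ⟨0, measure_ne_top _ _⟩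
    rwa [hiInter] at this
  have htendR : Filter.Tendsto (fun n => (Q0m (Ioi (xs n))).toReal + ∫ s in (0:ℝ)..t, lam s)
      Filter.atTop (nhds ((Q0m (Ici t)).toReal + ∫ s in (0:ℝ)..t, lam s)) := by
    exact Filter.Tendsto.add_const _ ((ENNReal.tendsto_toReal (measure_ne_top _ _)).comp htend)
  have hfin : Qtot t ≤ (Q0m (Ici t)).toReal + ∫ s in (0:ℝ)..t, lam s :=
    ge_of_tendsto htendR (Filter.Eventually.of_forall fun n => key (xs n) (hxs0 n) (hxst n))
  rwa [hIoiIci t]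
end
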